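/- Let p > 1 with conjugate exponent q (1/p + 1/q = 1), and let μ₀, μ₁ be finite nonnegative measures on a measurable space Ω with densities ρ₀, ρ₁ with respect to a common dominating measure λ. Then ∫ |ρ₀ − ρ₁| dλ ≤ c_p · (μ₀(Ω)^(1/q) + μ₁(Ω)^(1/q)) · (∫ |ρ₀^(1/p) − ρ₁^(1/p)|^p dλ)^(1/p), where c_p = max(p/2, 1). -/

import Mathlib

open MeasureTheory ENNReal

section Aux
open Real Set ENNReal MeasureTheory


-- case 1 < p ≤ 2
lemma keyB {p x y : ℝ} (hp : 1 < p) (hp2 : p ≤ 2) (hy : 0 ≤ y) (hyx : y ≤ x) :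
    x ^ p - y ^ p ≤ (x ^ (p-1) + y ^ (p-1)) * (x - y) := by
  have hx : 0 ≤ x := hy.trans hyx
  rcases eq_or_lt_of_le hx with h | hx0
  · have hx0 : x = 0 := h.symm
    have hy0 : y = 0 := le_antisymm (by linarith) hy
    simp [hx0, hy0]
  have hxp : x ^ p = x ^ (p-1) * x := by
    rw [← Real.rpow_add_one (ne_of_gt hx0)]; ring_nf
  rcases eq_or_lt_of_le hy with h | hy0
  · have hy0 : y = 0 := h.symm
    subst hy0
    rw [Real.zero_rpow (by linarith), Real.zero_rpow (by linarith)]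
    nlinarith [Real.rpow_nonneg hx (p-1)]
  have hyp : y ^ p = y ^ (p-1) * y := by
    rw [← Real.rpow_add_one (ne_of_gt hy0)]; ring_nf
  have key : y * x ^ (p-1) ≤ x * y ^ (p-1) := by
    have h1 : x ^ (p-1) = x ^ (p-2) * x := by
      rw [← Real.rpow_add_one (ne_of_gt hx0)]; ring_nf
    have h2 : y ^ (p-1) = y ^ (p-2) * y := by
      rw [← Real.rpow_add_one (ne_of_gt hy0)]; ring_nf
    have h3 : x ^ (p-2) ≤ y ^ (p-2) := by
      exact Real.rpow_le_rpow_of_nonpos hy0 hyx (by linarith)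
    rw [h1, h2]
    nlinarith [mul_le_mul_of_nonneg_left h3 (by positivity : (0:ℝ) ≤ x*y)]
  nlinarith [Real.rpow_nonneg hx (p-1), Real.rpow_nonneg hy (p-1)]

-- case p ≥ 2
lemma keyA {p x y : ℝ} (hp2 : 2 ≤ p) (hy : 0 ≤ y) (hyx : y ≤ x) :
    x ^ p - y ^ p ≤ (p/2) * ((x ^ (p-1) + y ^ (p-1)) * (x - y)) := by
  have hx : 0 ≤ x := hy.trans hyx
  rcases eq_or_lt_of_le hyx with h | hyx0
  · subst h; simp
  -- y < x
  set A : ℝ := (x * y^(p-1) - y * x^(p-1)) / (x - y) with hA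
  set B : ℝ := (x^(p-1) - y^(p-1)) / (x - y) with hB
  have hxy : (0:ℝ) < x - y := by linarith
  have hint1 : ∫ t in y..x, t ^ (p-1) = (x ^ p - y ^ p) / p := by
    rw [integral_rpow (Or.inl (by linarith))]
    ring_nf
  have hmono : ∀ t ∈ Icc y x, t ^ (p-1) ≤ A + B * t := by
    intro t ht
    obtain ⟨ht1, ht2⟩ := ht
    have cv := (convexOn_rpow (by linarith : 1 ≤ p - 1)).2
      (mem_Ici.mpr hy) (mem_Ici.mpr hx)
      (show (0:ℝ) ≤ (x - t)/(x-y) from div_nonneg (by linarith) (by linarith))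
      (show (0:ℝ) ≤ (t - y)/(x-y) from div_nonneg (by linarith) (by linarith))
      (show (x - t)/(x-y) + (t - y)/(x-y) = 1 by field_simp; ring)
    have ht' : ((x - t)/(x-y)) • y + ((t - y)/(x-y)) • x = t := by
      rw [smul_eq_mul, smul_eq_mul, div_mul_eq_mul_div, div_mul_eq_mul_div, ← add_div,
        div_eq_iff hxy.ne']; ring
    rw [ht'] at cv
    simp only [smul_eq_mul] at cv
    calc t ^ (p-1) ≤ (x - t)/(x-y) * y^(p-1) + (t - y)/(x-y) * x^(p-1) := cv
      _ = A + B * t := by rw [hA, hB]; ring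
  have hii1 : IntervalIntegrable (fun t : ℝ => t ^ (p-1)) MeasureTheory.volume y x :=
    intervalIntegral.intervalIntegrable_rpow (Or.inl (by linarith))
  have hii2 : IntervalIntegrable (fun t : ℝ => A + B * t) MeasureTheory.volume y x :=
    (continuous_const.add (continuous_const.mul continuous_id)).intervalIntegrable _ _
  have hle := intervalIntegral.integral_mono_on hyx hii1 hii2 hmono
  have hint2 : ∫ t in y..x, (A + B * t) = A * (x - y) + B * ((x^2 - y^2)/2) := by
    rw [intervalIntegral.integral_add (g := fun t : ℝ => B * t) intervalIntegrable_const
        ((continuous_const.mul continuous_id').intervalIntegrable _ _),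
      intervalIntegral.integral_const, intervalIntegral.integral_const_mul,
      integral_id]
    simp [smul_eq_mul]; ring
  rw [hint1, hint2] at hle
  have hp0 : (0:ℝ) < p := by linarith
  have : x ^ p - y ^ p ≤ p * (A * (x - y) + B * ((x^2 - y^2)/2)) := by
    rw [div_le_iff₀ hp0] at hle; linarith [hle]
  calc x ^ p - y ^ p ≤ p * (A * (x - y) + B * ((x^2 - y^2)/2)) := this
    _ = (p/2) * ((x ^ (p-1) + y ^ (p-1)) * (x - y)) := by
        rw [hA, hB]; field_simp; ring

lemma keyReal {p x y : ℝ} (hp : 1 < p) (hy : 0 ≤ y) (hyx : y ≤ x) :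
    x ^ p - y ^ p ≤ max (p/2) 1 * ((x ^ (p-1) + y ^ (p-1)) * (x - y)) := by
  have hx : 0 ≤ x := hy.trans hyx
  have hfac : 0 ≤ (x ^ (p-1) + y ^ (p-1)) * (x - y) := by
    have := Real.rpow_nonneg hx (p-1); have := Real.rpow_nonneg hy (p-1)
    nlinarith
  rcases le_total p 2 with h | h
  · calc x ^ p - y ^ p ≤ (x ^ (p-1) + y ^ (p-1)) * (x - y) := keyB hp h hy hyx
      _ ≤ max (p/2) 1 * ((x ^ (p-1) + y ^ (p-1)) * (x - y)) := by
          nlinarith [le_max_right (p/2) (1:ℝ)]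
  · calc x ^ p - y ^ p ≤ (p/2) * ((x ^ (p-1) + y ^ (p-1)) * (x - y)) := keyA h hy hyx
      _ ≤ max (p/2) 1 * ((x ^ (p-1) + y ^ (p-1)) * (x - y)) := by
          nlinarith [le_max_left (p/2) (1:ℝ)]


lemma keyENNaux {p : ℝ} (hp : 1 < p) {u v : ℝ≥0∞} (hvu : v ≤ u) :
    u ^ p - v ^ p ≤ ENNReal.ofReal (max (p/2) 1) * ((u ^ (p-1) + v ^ (p-1)) * (u - v)) := by
  have hc : ENNReal.ofReal (max (p/2) 1) ≠ 0 :=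
    (ENNReal.ofReal_pos.mpr (lt_of_lt_of_le one_pos (le_max_right _ _))).ne'
  by_cases hu : u = ∞
  · by_cases hv : v = ∞
    · subst hu; subst hv; simp
    · subst hu
      rw [ENNReal.top_rpow_of_pos (by linarith : (0:ℝ) < p - 1), ENNReal.top_sub hv,
        top_add, ENNReal.top_mul (by simp), ENNReal.mul_top hc]
      exact le_top
  · have hv : v ≠ ∞ := fun h => hu (top_le_iff.mp (h ▸ hvu))
    have hb : 0 ≤ v.toReal := ENNReal.toReal_nonneg
    have hba : v.toReal ≤ u.toReal := (ENNReal.toReal_le_toReal hv hu).mpr hvu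
    have hp1 : (0:ℝ) ≤ p - 1 := by linarith
    conv_lhs => rw [← ENNReal.ofReal_toReal hu, ← ENNReal.ofReal_toReal hv]
    conv_rhs => rw [← ENNReal.ofReal_toReal hu, ← ENNReal.ofReal_toReal hv]
    rw [ENNReal.ofReal_rpow_of_nonneg ENNReal.toReal_nonneg (by linarith : (0:ℝ) ≤ p),
      ENNReal.ofReal_rpow_of_nonneg hb (by linarith : (0:ℝ) ≤ p),
      ENNReal.ofReal_rpow_of_nonneg ENNReal.toReal_nonneg hp1,
      ENNReal.ofReal_rpow_of_nonneg hb hp1,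
      ← ENNReal.ofReal_sub _ (Real.rpow_nonneg hb p),
      ← ENNReal.ofReal_sub _ hb,
      ← ENNReal.ofReal_add (Real.rpow_nonneg (hb.trans hba) _) (Real.rpow_nonneg hb _),
      ← ENNReal.ofReal_mul (by positivity),
      ← ENNReal.ofReal_mul (by positivity)]
    exact ENNReal.ofReal_le_ofReal (keyReal hp hb hba)

lemma keyENN {p : ℝ} (hp : 1 < p) (u v : ℝ≥0∞) :
    (u ^ p - v ^ p) ⊔ (v ^ p - u ^ p) ≤
      ENNReal.ofReal (max (p/2) 1) * ((u ^ (p-1) + v ^ (p-1)) * ((u - v) ⊔ (v - u))) := by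
  rcases le_total v u with h | h
  · refine sup_le (le_trans (keyENNaux hp h) ?_) ?_
    · gcongr; exact le_sup_left
    · rw [tsub_eq_zero_of_le (ENNReal.rpow_le_rpow h (by linarith))]; exact zero_le
  · refine sup_le ?_ (le_trans (keyENNaux hp h) ?_)
    · rw [tsub_eq_zero_of_le (ENNReal.rpow_le_rpow h (by linarith))]; exact zero_le
    · rw [add_comm (u ^ (p-1))]; gcongr; exact le_sup_right

lemma keyPt {p q : ℝ} (hp : 1 < p) (hq : 1 / p + 1 / q = 1) (a b : ℝ≥0∞) :
    (a - b) ⊔ (b - a) ≤ ENNReal.ofReal (max (p/2) 1) *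
      ((a ^ (1/q) + b ^ (1/q)) * ((a ^ (1/p) - b ^ (1/p)) ⊔ (b ^ (1/p) - a ^ (1/p)))) := by
  have hp0 : p ≠ 0 := by positivity
  have hq' : (1/p) * p = 1 := by field_simp
  have hq'' : (1/p) * (p - 1) = 1/q := by
    have : 1/q = 1 - 1/p := by linarith
    rw [this]; field_simp
  have hup : ∀ a : ℝ≥0∞, (a ^ (1/p)) ^ p = a := fun a => by
    rw [← ENNReal.rpow_mul, hq', ENNReal.rpow_one]
  have huq : ∀ a : ℝ≥0∞, (a ^ (1/p)) ^ (p-1) = a ^ (1/q) := fun a => by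
    rw [← ENNReal.rpow_mul, hq'']
  calc (a - b) ⊔ (b - a)
      = ((a ^ (1/p)) ^ p - (b ^ (1/p)) ^ p) ⊔ ((b ^ (1/p)) ^ p - (a ^ (1/p)) ^ p) := by
        rw [hup, hup]
    _ ≤ ENNReal.ofReal (max (p/2) 1) *
        (((a ^ (1/p)) ^ (p-1) + (b ^ (1/p)) ^ (p-1)) *
          ((a ^ (1/p) - b ^ (1/p)) ⊔ (b ^ (1/p) - a ^ (1/p)))) := keyENN hp _ _
    _ = _ := by rw [huq, huq]

end Aux

/-- Total variation is controlled by the `p`-Hellinger distance: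
`He₁(μ₀,μ₁) ≤ c_p (μ₀(Ω)^{1/q} + μ₁(Ω)^{1/q}) · He_p(μ₀,μ₁)` with `c_p = max(p/2,1)`. -/
theorem totalVariation_le_hellinger {Ω : Type*} [MeasurableSpace Ω]
    (lam : Measure Ω) [SigmaFinite lam]
    (ρ₀ ρ₁ : Ω → ℝ≥0∞) (hρ₀ : Measurable ρ₀) (hρ₁ : Measurable ρ₁)
    (μ₀ μ₁ : Measure Ω) [IsFiniteMeasure μ₀] [IsFiniteMeasure μ₁]
    (h₀ : μ₀ = lam.withDensity ρ₀) (h₁ : μ₁ = lam.withDensity ρ₁)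
    (p q : ℝ) (hp : 1 < p) (hq : 1 / p + 1 / q = 1) :
    ∫⁻ x, ((ρ₀ x - ρ₁ x) ⊔ (ρ₁ x - ρ₀ x)) ∂lam ≤
      ENNReal.ofReal (max (p / 2) 1) *
        ((μ₀ Set.univ) ^ (1 / q) + (μ₁ Set.univ) ^ (1 / q)) *
        (∫⁻ x, ((ρ₀ x ^ (1 / p) - ρ₁ x ^ (1 / p)) ⊔ (ρ₁ x ^ (1 / p) - ρ₀ x ^ (1 / p))) ^ p ∂lam)
          ^ (1 / p) := by
  have hpq : p.HolderConjugate q := ⟨by rw [inv_one, ← one_div, ← one_div]; exact hq, by linarith,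
    by
      have h1 : 1/p < 1 := by rw [div_lt_one (by linarith)]; exact hp
      exact one_div_pos.mp (by linarith)⟩
  have hq0 : q ≠ 0 := hpq.symm.pos.ne'
  set c := ENNReal.ofReal (max (p / 2) 1) with hc
  set D : Ω → ℝ≥0∞ := fun x =>
    (ρ₀ x ^ (1 / p) - ρ₁ x ^ (1 / p)) ⊔ (ρ₁ x ^ (1 / p) - ρ₀ x ^ (1 / p)) with hD
  have hDm : Measurable D :=
    ((hρ₀.pow_const _).sub (hρ₁.pow_const _)).max ((hρ₁.pow_const _).sub (hρ₀.pow_const _))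
  set H := (∫⁻ x, D x ^ p ∂lam) ^ (1 / p) with hH
  have hold : ∀ ρ : Ω → ℝ≥0∞, Measurable ρ →
      ∫⁻ x, ρ x ^ (1/q) * D x ∂lam ≤ (∫⁻ x, ρ x ∂lam) ^ (1/q) * H := by
    intro ρ hρ
    calc ∫⁻ x, ρ x ^ (1/q) * D x ∂lam
        = ∫⁻ x, (D * fun y => ρ y ^ (1/q)) x ∂lam := by
          simp only [Pi.mul_apply]; exact lintegral_congr fun x => mul_comm _ _
      _ ≤ (∫⁻ x, D x ^ p ∂lam) ^ (1/p) * (∫⁻ x, (ρ x ^ (1/q)) ^ q ∂lam) ^ (1/q) :=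
          ENNReal.lintegral_mul_le_Lp_mul_Lq lam hpq hDm.aemeasurable
            ((hρ.pow_const _).aemeasurable)
      _ = (∫⁻ x, ρ x ∂lam) ^ (1/q) * H := by
          rw [mul_comm]
          congr 1
          refine congrArg (· ^ (1/q)) (lintegral_congr fun x => ?_)
          rw [← ENNReal.rpow_mul, one_div, inv_mul_cancel₀ hq0, ENNReal.rpow_one]
  have hμ₀ : μ₀ Set.univ = ∫⁻ x, ρ₀ x ∂lam := by
    rw [h₀, withDensity_apply _ MeasurableSet.univ, Measure.restrict_univ]
  have hμ₁ : μ₁ Set.univ = ∫⁻ x, ρ₁ x ∂lam := by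
    rw [h₁, withDensity_apply _ MeasurableSet.univ, Measure.restrict_univ]
  calc ∫⁻ x, ((ρ₀ x - ρ₁ x) ⊔ (ρ₁ x - ρ₀ x)) ∂lam
      ≤ ∫⁻ x, c * ((ρ₀ x ^ (1/q) + ρ₁ x ^ (1/q)) * D x) ∂lam :=
        lintegral_mono fun x => keyPt hp hq (ρ₀ x) (ρ₁ x)
    _ = c * ∫⁻ x, (ρ₀ x ^ (1/q) * D x + ρ₁ x ^ (1/q) * D x) ∂lam := by
        rw [← lintegral_const_mul c (f := fun x => ρ₀ x ^ (1/q) * D x + ρ₁ x ^ (1/q) * D x)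
          (((hρ₀.pow_const _).mul hDm).add ((hρ₁.pow_const _).mul hDm))]
        exact lintegral_congr fun x => by ring
    _ = c * ((∫⁻ x, ρ₀ x ^ (1/q) * D x ∂lam) + ∫⁻ x, ρ₁ x ^ (1/q) * D x ∂lam) := by
        rw [lintegral_add_left (f := fun x => ρ₀ x ^ (1/q) * D x) ((hρ₀.pow_const _).mul hDm)]
    _ ≤ c * ((∫⁻ x, ρ₀ x ∂lam) ^ (1/q) * H + (∫⁻ x, ρ₁ x ∂lam) ^ (1/q) * H) :=
        mul_le_mul_right (add_le_add (hold _ hρ₀) (hold _ hρ₁)) c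
    _ = c * ((μ₀ Set.univ) ^ (1/q) + (μ₁ Set.univ) ^ (1/q)) * H := by
        rw [hμ₀, hμ₁]; ring
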